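/- Let M_d: ℝ/ℤ → ℝ/ℤ be multiplication by d, let α, α' ∈ ℝ/ℤ with α' = α + k/d for some 1 ≤ k < d/2, and let I ⊂ ℝ/ℤ be an interval of length < 1/d. Let I_0, I_1 be the two connected components of (ℝ/ℤ) \ {α, α'}, of lengths ℓ_0/d and ℓ_1/d with ℓ_0 + ℓ_1 = d. Then for each ε ∈ {0,1}, M_d^{−1}(I) ∩ I_ε consists of at most ℓ_ε + 1 intervals, and of exactly ℓ_ε intervals when dα ∉ I. -/

import Mathlib

/-- The circle `ℝ/ℤ`. -/
abbrev Circle1 := AddCircle (1 : ℝ)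

/-- An (open) arc of the circle: the image of a bounded open interval of length at most `1`. -/
def IsArc (A : Set Circle1) : Prop :=
  ∃ a b : ℝ, a < b ∧ b - a ≤ 1 ∧ A = (fun x : ℝ => (x : Circle1)) '' Set.Ioo a b

open Set


lemma cc {x y : ℝ} : (x : Circle1) = (y : Circle1) ↔ ∃ n : ℤ, x = y + n := by
  rw [QuotientAddGroup.eq_iff_sub_mem, AddSubgroup.mem_zmultiples_iff]
  constructor
  · rintro ⟨n, hn⟩
    rw [zsmul_eq_mul, mul_one] at hn
    exact ⟨n, by linarith⟩
  · rintro ⟨n, hn⟩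
    exact ⟨n, by rw [zsmul_eq_mul, mul_one]; linarith⟩

lemma memI {s t x : ℝ} :
    ((x : Circle1) ∈ (fun y : ℝ => (y : Circle1)) '' Set.Ioo s t) ↔
      ∃ j : ℤ, x - j ∈ Set.Ioo s t := by
  constructor
  · rintro ⟨y, hy, hxy⟩
    obtain ⟨n, hn⟩ := cc.mp hxy
    refine ⟨-n, ?_⟩
    push_cast
    rw [sub_neg_eq_add, ← hn]
    exact hy
  · rintro ⟨j, hj⟩
    exact ⟨x - j, hj, cc.mpr ⟨-j, by push_cast; ring⟩⟩

lemma nsmul_coe (d : ℕ) (x : ℝ) : d • ((x : ℝ) : Circle1) = ((d * x : ℝ) : Circle1) := by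
  rw [← AddCircle.coe_nsmul]; norm_num

lemma decomp (d : ℕ) (hd : 0 < d) (s t β γ : ℝ) :
    ((fun x : Circle1 => d • x) ⁻¹' ((fun x : ℝ => (x : Circle1)) '' Set.Ioo s t)) ∩
        ((fun x : ℝ => (x : Circle1)) '' Set.Ioo β γ)
      = ⋃ j : ℤ, (fun x : ℝ => (x : Circle1)) ''
          (Set.Ioo β γ ∩ Set.Ioo ((s + j) / d) ((t + j) / d)) := by
  have hd' : (0:ℝ) < d := by exact_mod_cast hd
  ext z
  constructor
  · rintro ⟨hz1, x, hx, rfl⟩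
    rw [Set.mem_preimage, nsmul_coe, memI] at hz1
    obtain ⟨j, hj⟩ := hz1
    refine Set.mem_iUnion.2 ⟨j, x, ⟨hx, ?_, ?_⟩, rfl⟩
    · rw [div_lt_iff₀ hd']; linarith [hj.1]
    · rw [lt_div_iff₀ hd']; linarith [hj.2]
  · rintro hz
    obtain ⟨j, x, ⟨hx1, hx2⟩, rfl⟩ := Set.mem_iUnion.1 hz
    refine ⟨?_, x, hx1, rfl⟩
    rw [Set.mem_preimage, nsmul_coe, memI]
    rw [Set.mem_Ioo, div_lt_iff₀ hd', lt_div_iff₀ hd'] at hx2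
    exact ⟨j, by constructor <;> [linarith [hx2.1]; linarith [hx2.2]]⟩

lemma exact_arcs (d m : ℕ) (hd : 0 < d) (hm : 0 < m) (hmd : m < d) (s t β : ℝ) (hst : s < t)
    (hlen : t - s < 1 / d)
    (hβ : ((d * β : ℝ) : Circle1) ∉ (fun x : ℝ => (x : Circle1)) '' Set.Ioo s t) :
    ∃ A : Fin m → Set Circle1, (∀ i, IsArc (A i) ∧ (A i).Nonempty) ∧
      (∀ i j, i ≠ j → Disjoint (A i) (A j)) ∧
      ((fun x : Circle1 => d • x) ⁻¹' ((fun x : ℝ => (x : Circle1)) '' Set.Ioo s t)) ∩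
          ((fun x : ℝ => (x : Circle1)) '' Set.Ioo β (β + m / d)) = ⋃ i, A i := by
  have hd' : (0:ℝ) < d := by exact_mod_cast hd
  have hd1 : (1:ℝ) ≤ d := by exact_mod_cast hd
  have hm' : (1:ℝ) ≤ m := by exact_mod_cast hm
  have hmd' : (m:ℝ) < d := by exact_mod_cast hmd
  have hts1 : t - s < 1 := lt_of_lt_of_le hlen (by rw [div_le_one hd']; exact hd1)
  set j1 : ℤ := ⌊d * β - t⌋ + 1 with hj1
  have hj1R : (j1:ℝ) = (⌊d * β - t⌋ : ℤ) + 1 := by rw [hj1]; push_cast; ring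
  have h' : ∀ j : ℤ, d * β - j ∉ Set.Ioo s t := fun j hj => hβ (memI.mpr ⟨j, hj⟩)
  have f1 : d * β < t + j1 := by
    have := Int.lt_floor_add_one (d * β - t); rw [hj1R]; linarith
  have f2 : d * β ≤ s + j1 := by
    by_contra hcon
    push_neg at hcon
    exact h' j1 ⟨by linarith, by linarith⟩
  have f3 : t + (j1:ℝ) - 1 ≤ d * β := by
    have := Int.floor_le (d * β - t); rw [hj1R]; linarith
  -- bounds for the relevant pieces
  have lowb : ∀ j : ℤ, j1 ≤ j → β ≤ (s + j) / d := by
    intro j hj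
    rw [le_div_iff₀ hd']
    have : (j1:ℝ) ≤ j := by exact_mod_cast hj
    linarith
  have upb : ∀ j : ℤ, (j:ℝ) ≤ j1 + m - 1 → (t + j) / d ≤ β + m / d := by
    intro j hj
    rw [div_le_iff₀ hd']
    have : (β + m / d) * d = d * β + m := by field_simp
    rw [this]
    linarith
  have hsub : ∀ j : ℤ, j1 ≤ j → (j:ℝ) ≤ j1 + m - 1 →
      Set.Ioo ((s + j) / d) ((t + j) / d) ⊆ Set.Ioo β (β + m / d) :=
    fun j h1 h2 => Set.Ioo_subset_Ioo (lowb j h1) (upb j h2)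
  have hilb : ∀ i : Fin m, j1 ≤ j1 + (i:ℕ) := fun i => by omega
  have hiub : ∀ i : Fin m, ((j1 + (i:ℕ) : ℤ):ℝ) ≤ (j1:ℝ) + m - 1 := by
    intro i
    have : (i:ℕ) + 1 ≤ m := i.isLt
    have : ((i:ℕ):ℝ) + 1 ≤ m := by exact_mod_cast this
    push_cast
    linarith
  have habR : ∀ c : ℝ, (s + c) / d < (t + c) / d := by
    intro c; gcongr
  have hlenR : ∀ c : ℝ, (t + c) / d - (s + c) / d ≤ 1 := by
    intro c
    have he : (t + c) / d - (s + c) / d = (t - s) / d := by ring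
    rw [he, div_le_one hd']
    linarith
  -- the arcs
  refine ⟨fun i => (fun x : ℝ => (x : Circle1)) ''
      Set.Ioo ((s + ((j1 + (i:ℕ) : ℤ) : ℝ)) / d) ((t + ((j1 + (i:ℕ) : ℤ) : ℝ)) / d), ?_, ?_, ?_⟩
  · intro i
    exact ⟨⟨_, _, habR _, hlenR _, rfl⟩,
      Set.Nonempty.image _ (Set.nonempty_Ioo.mpr (habR _))⟩
  · -- disjointness
    intro i i' hne
    rw [Set.disjoint_left]
    rintro z ⟨x, hx, rfl⟩ ⟨y, hy, hyx⟩
    obtain ⟨n, hn⟩ := cc.mp hyx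
    have hxw := hsub _ (hilb i) (hiub i) hx
    have hyw := hsub _ (hilb i') (hiub i') hy
    have hn0 : n = 0 := by
      have h1 : (n:ℝ) < 1 := by
        have := hxw.1; have := hxw.2; have := hyw.1; have := hyw.2
        have hmd1 : (m:ℝ)/d < 1 := by rw [div_lt_one hd']; exact hmd'
        linarith
      have h2 : (-1:ℝ) < n := by
        have := hxw.1; have := hxw.2; have := hyw.1; have := hyw.2
        have hmd1 : (m:ℝ)/d < 1 := by rw [div_lt_one hd']; exact hmd'
        linarith
      have h1' : n < 1 := by exact_mod_cast h1
      have h2' : -1 < n := by exact_mod_cast h2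
      omega
    rw [hn0] at hn
    push_cast at hn
    rw [add_zero] at hn
    subst hn
    -- now y in both intervals; contradiction
    have key : ∀ a b : Fin m, (a:ℕ) < (b:ℕ) →
        ¬ (y ∈ Set.Ioo ((s + ((j1 + (a:ℕ) : ℤ) : ℝ)) / d) ((t + ((j1 + (a:ℕ) : ℤ) : ℝ)) / d) ∧
           y ∈ Set.Ioo ((s + ((j1 + (b:ℕ) : ℤ) : ℝ)) / d) ((t + ((j1 + (b:ℕ) : ℤ) : ℝ)) / d)) := by
      rintro a b hab ⟨ha, hb⟩
      have h1 : (t + ((j1 + (a:ℕ) : ℤ) : ℝ)) / d ≤ (s + ((j1 + (b:ℕ) : ℤ) : ℝ)) / d := by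
        have hc : ((a:ℕ):ℝ) + 1 ≤ ((b:ℕ):ℝ) := by exact_mod_cast hab
        rw [div_le_div_iff₀ hd' hd']
        have hAB : (t + ((j1 + (a:ℕ) : ℤ) : ℝ)) ≤ (s + ((j1 + (b:ℕ) : ℤ) : ℝ)) := by
          push_cast; linarith
        nlinarith [hAB, hd'.le]
      linarith [ha.2, hb.1]
    rcases lt_or_gt_of_ne (fun h : (i:ℕ) = (i':ℕ) => hne (Fin.ext h)) with h | h
    · exact key i i' h ⟨hx, hy⟩
    · exact key i' i h ⟨hy, hx⟩
  · -- union
    rw [decomp d hd s t β (β + m / d)]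
    apply Set.Subset.antisymm
    · intro z hz
      obtain ⟨j, x, ⟨hxw, hxj⟩, rfl⟩ := Set.mem_iUnion.1 hz
      have hj1le : j1 ≤ j := by
        have h1 : d * β < t + j := by
          have := hxw.1
          have := hxj.2
          rw [lt_div_iff₀ hd'] at this
          nlinarith [hxw.1, hd']
        have : ⌊d * β - t⌋ < j := Int.floor_lt.mpr (by push_cast; linarith)
        omega
      have hjubZ : j ≤ j1 + (m:ℤ) - 1 := by
        have h1 : s + j < d * β + m := by
          have h2 := hxj.1
          rw [div_lt_iff₀ hd'] at h2
          have h3 := hxw.2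
          have : (β + m / d) * d = d * β + m := by field_simp
          nlinarith
        have h2 : (j:ℝ) < (j1:ℝ) + m := by linarith
        have h3 : j < j1 + (m:ℤ) := by exact_mod_cast h2
        omega
      refine Set.mem_iUnion.2 ⟨⟨(j - j1).toNat, by omega⟩, x, ?_, rfl⟩
      have : (j1 + (((j - j1).toNat : ℕ) : ℤ)) = j := by omega
      rw [this]
      exact hxj
    · intro z hz
      obtain ⟨i, x, hx, rfl⟩ := Set.mem_iUnion.1 hz
      refine Set.mem_iUnion.2 ⟨j1 + (i:ℕ), x, ⟨hsub _ (hilb i) (hiub i) hx, hx⟩, rfl⟩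

lemma atmost_arcs (d m : ℕ) (hd : 0 < d) (hm : 0 < m) (hmd : m ≤ d) (s t β : ℝ)
    (hst : s < t) (hlen : t - s < 1 / d) :
    ∃ n : ℕ, n ≤ m + 1 ∧ ∃ A : Fin n → Set Circle1, (∀ i, IsArc (A i)) ∧
      ((fun x : Circle1 => d • x) ⁻¹' ((fun x : ℝ => (x : Circle1)) '' Set.Ioo s t)) ∩
          ((fun x : ℝ => (x : Circle1)) '' Set.Ioo β (β + m / d)) = ⋃ i, A i := by
  classical
  have hd' : (0:ℝ) < d := by exact_mod_cast hd
  have hd1 : (1:ℝ) ≤ d := by exact_mod_cast hd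
  have hmd' : (m:ℝ) ≤ d := by exact_mod_cast hmd
  have hts1 : t - s < 1 := lt_of_lt_of_le hlen (by rw [div_le_one hd']; exact hd1)
  set P : ℤ → Set ℝ :=
    fun j => Set.Ioo β (β + m / d) ∩ Set.Ioo ((s + j) / d) ((t + j) / d) with hP
  have hdecomp := decomp d hd s t β (β + m / d)
  set j1 : ℤ := ⌊d * β - t⌋ + 1 with hj1
  have hj1R : (j1:ℝ) = (⌊d * β - t⌋ : ℤ) + 1 := by rw [hj1]; push_cast; ring
  have f1 : d * β < t + j1 := by
    have := Int.lt_floor_add_one (d * β - t); rw [hj1R]; linarith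
  have hrange : ∀ j : ℤ, (P j).Nonempty → j1 ≤ j ∧ j ≤ j1 + m := by
    rintro j ⟨x, ⟨hxw1, hxw2⟩, hxj1, hxj2⟩
    rw [lt_div_iff₀ hd'] at hxj2
    rw [div_lt_iff₀ hd'] at hxj1
    constructor
    · have h1 : d * β < t + j := by nlinarith
      have h2 : ⌊d * β - t⌋ < j := Int.floor_lt.mpr (by push_cast; linarith)
      omega
    · have hfs : (β + m / d) * d = d * β + m := by field_simp
      have h2 : s + (j:ℝ) < d * β + m := by nlinarith
      have h3 : (j:ℝ) < (j1:ℝ) + m + 1 := by linarith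
      have h4 : j < j1 + (m:ℤ) + 1 := by exact_mod_cast h3
      omega
  have harc : ∀ j : ℤ, (P j).Nonempty → IsArc ((fun x : ℝ => (x : Circle1)) '' P j) := by
    intro j hne
    have hPe : P j = Set.Ioo (max β ((s + j) / d)) (min (β + m / d) ((t + j) / d)) := by
      rw [hP]; exact Set.Ioo_inter_Ioo
    rw [hPe] at hne ⊢
    refine ⟨_, _, Set.nonempty_Ioo.mp hne, ?_, rfl⟩
    have h1 : min (β + m / d) ((t + j) / d) ≤ β + m / d := min_le_left _ _
    have h2 : β ≤ max β ((s + j) / d) := le_max_left _ _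
    have h3 : (m:ℝ) / d ≤ 1 := by rw [div_le_one hd']; exact hmd'
    linarith
  by_cases hS : (⋃ j : ℤ, (fun x : ℝ => (x : Circle1)) '' P j) = ∅
  · exact ⟨0, by omega, Fin.elim0, fun i => i.elim0, by rw [hdecomp, hS]; simp⟩
  · have hex : ∃ j, (P j).Nonempty := by
      rcases Set.nonempty_iff_ne_empty.mpr hS with ⟨z, hz⟩
      obtain ⟨j, x, hx, rfl⟩ := Set.mem_iUnion.1 hz
      exact ⟨j, ⟨x, hx⟩⟩
    obtain ⟨j₀, hj₀⟩ := hex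
    refine ⟨m + 1, le_rfl, fun i => (fun x : ℝ => (x : Circle1)) ''
      (if (P (j1 + (i:ℕ))).Nonempty then P (j1 + (i:ℕ)) else P j₀), ?_, ?_⟩
    · intro i
      dsimp only
      by_cases h : (P (j1 + (i:ℕ))).Nonempty
      · rw [if_pos h]; exact harc _ h
      · rw [if_neg h]; exact harc _ hj₀
    · rw [hdecomp]
      apply Set.Subset.antisymm
      · intro z hz
        obtain ⟨j, x, hx, rfl⟩ := Set.mem_iUnion.1 hz
        have hne : (P j).Nonempty := ⟨x, hx⟩
        obtain ⟨h1, h2⟩ := hrange j hne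
        refine Set.mem_iUnion.2 ⟨⟨(j - j1).toNat, by omega⟩, ?_⟩
        have heq : j1 + (((j - j1).toNat : ℕ) : ℤ) = j := by omega
        simp only [Fin.val_mk, heq, if_pos hne]
        exact ⟨x, hx, rfl⟩
      · intro z hz
        obtain ⟨i, hzi⟩ := Set.mem_iUnion.1 hz
        by_cases h : (P (j1 + (i:ℕ))).Nonempty
        · rw [if_pos h] at hzi; exact Set.mem_iUnion.2 ⟨_, hzi⟩
        · rw [if_neg h] at hzi; exact Set.mem_iUnion.2 ⟨j₀, hzi⟩

theorem preimage_arcs_count (d k : ℕ) (hd : 3 ≤ d) (hk : 1 ≤ k) (hk2 : 2 * k < d)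
    (α s t : ℝ) (hst : s < t) (hlen : t - s < 1 / d) :
    (∃ n : ℕ, n ≤ k + 1 ∧ ∃ A : Fin n → Set Circle1, (∀ i, IsArc (A i)) ∧
      ((fun x : Circle1 => d • x) ⁻¹' ((fun x : ℝ => (x : Circle1)) '' Set.Ioo s t)) ∩
          ((fun x : ℝ => (x : Circle1)) '' Set.Ioo α (α + k / d)) = ⋃ i, A i) ∧
    (∃ n : ℕ, n ≤ (d - k) + 1 ∧ ∃ A : Fin n → Set Circle1, (∀ i, IsArc (A i)) ∧
      ((fun x : Circle1 => d • x) ⁻¹' ((fun x : ℝ => (x : Circle1)) '' Set.Ioo s t)) ∩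
          ((fun x : ℝ => (x : Circle1)) '' Set.Ioo (α + k / d) (α + 1)) = ⋃ i, A i) ∧
    (d • ((α : ℝ) : Circle1) ∉ (fun x : ℝ => (x : Circle1)) '' Set.Ioo s t →
      (∃ A : Fin k → Set Circle1, (∀ i, IsArc (A i) ∧ (A i).Nonempty) ∧
        (∀ i j, i ≠ j → Disjoint (A i) (A j)) ∧
        ((fun x : Circle1 => d • x) ⁻¹' ((fun x : ℝ => (x : Circle1)) '' Set.Ioo s t)) ∩
            ((fun x : ℝ => (x : Circle1)) '' Set.Ioo α (α + k / d)) = ⋃ i, A i) ∧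
      (∃ A : Fin (d - k) → Set Circle1, (∀ i, IsArc (A i) ∧ (A i).Nonempty) ∧
        (∀ i j, i ≠ j → Disjoint (A i) (A j)) ∧
        ((fun x : Circle1 => d • x) ⁻¹' ((fun x : ℝ => (x : Circle1)) '' Set.Ioo s t)) ∩
            ((fun x : ℝ => (x : Circle1)) '' Set.Ioo (α + k / d) (α + 1)) = ⋃ i, A i)) := by
  have hd0 : 0 < d := by omega
  have hkd : k < d := by omega
  have hdk0 : 0 < d - k := by omega
  have hdkd : d - k < d := by omega
  have hd' : (0:ℝ) < d := by exact_mod_cast hd0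
  have hcast : ((d - k : ℕ) : ℝ) = (d:ℝ) - k := by
    rw [Nat.cast_sub (le_of_lt hkd)]
  have hk' : (0:ℝ) < k := by exact_mod_cast hk
  have hiv : (α + k / d) + ((d - k : ℕ) : ℝ) / d = α + 1 := by
    rw [hcast]; field_simp; ring
  refine ⟨?_, ?_, ?_⟩
  · exact atmost_arcs d k hd0 hk (le_of_lt hkd) s t α hst hlen
  · have h := atmost_arcs d (d - k) hd0 hdk0 (le_of_lt hdkd) s t (α + k / d) hst hlen
    rwa [hiv] at h
  · intro hI
    have hI' : ((d * α : ℝ) : Circle1) ∉ (fun x : ℝ => (x : Circle1)) '' Set.Ioo s t := by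
      rwa [nsmul_coe] at hI
    have hI2 : (((d : ℝ) * (α + k / d) : ℝ) : Circle1) ∉
        (fun x : ℝ => (x : Circle1)) '' Set.Ioo s t := by
      have he : (d:ℝ) * (α + k / d) = d * α + (k:ℕ) := by field_simp
      have he2 : (((d:ℝ) * (α + k / d) : ℝ) : Circle1) = ((d * α : ℝ) : Circle1) := by
        rw [he]
        exact cc.mpr ⟨(k:ℤ), by push_cast; ring⟩
      rwa [he2]
    constructor
    · exact exact_arcs d k hd0 hk hkd s t α hst hlen hI'
    · have h := exact_arcs d (d - k) hd0 hdk0 hdkd s t (α + k / d) hst hlen hI2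
      rwa [hiv] at h
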